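/- Fix an admissible sequence of probability measures ν_n on Δ^{n-1}, integers p ≥ 0 and k ≥ 1. Let F_n : Δ^{n-1} → ℝ be measurable with F_n = B_n := ∑_{i=0}^p C(n-1,i) on Γ_{p+2} and 0 ≤ F_n ≤ 2(n-1)^p everywhere. Then there exist C > 0 and 0 < a < 1 such that |∫_{Δ^{n-1}} F_n^k dν_n − B_n^k| < C·a^n for all n ≥ 3. -/

import Mathlib

open MeasureTheory Finset Filter

/-- The open standard simplex Δ^m ⊂ ℝ^{m+1}. -/
def Simplex (m : ℕ) : Set (Fin (m+1) → ℝ) :=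
  {ℓ | (∀ i, 0 < ℓ i) ∧ ∑ i, ℓ i = 1}

/-- Parametrization of the hyperplane ∑ ℓ i = 1 by ℝ^m. -/
noncomputable def emb (m : ℕ) (x : Fin m → ℝ) : Fin (m+1) → ℝ :=
  Fin.snoc x (1 - ∑ i, x i)

/-- Normalized Lebesgue measure of a subset of the simplex Δ^m,
computed as a ratio of Lebesgue volumes in the parametrizing chart. -/
noncomputable def simplexMeasure (m : ℕ) (A : Set (Fin (m+1) → ℝ)) : ENNReal :=
  volume (emb m ⁻¹' A) / volume (emb m ⁻¹' (Simplex m))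

/-- The set Γ_p of length vectors for which every p-element subset is short. -/
def Gamma (m p : ℕ) : Set (Fin (m+1) → ℝ) :=
  {ℓ ∈ Simplex m | ∀ J : Finset (Fin (m+1)), J.card = p → ∑ i ∈ J, ℓ i < 1/2}

/-- The set Λ_p where some coordinate is ≥ 1/(2p). -/
def Lambda (m p : ℕ) : Set (Fin (m+1) → ℝ) :=
  {ℓ ∈ Simplex m | ∃ i, 1/(2*(p:ℝ)) ≤ ℓ i}

/-- The normalized Lebesgue measure μ_n on the simplex Δ^m ⊂ ℝ^{m+1},
as an actual measure on ℝ^{m+1} (supported on the simplex). -/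
noncomputable def simplexProb (m : ℕ) : Measure (Fin (m+1) → ℝ) :=
  (m.factorial : ENNReal) • Measure.map (emb m) (volume.restrict (emb m ⁻¹' Simplex m))

lemma corner_vol : ∀ (d : ℕ) (c : ℝ),
    volume {x : Fin d → ℝ | (∀ i, 0 ≤ x i) ∧ ∑ i, x i ≤ c} ≤ ENNReal.ofReal (c^d / d.factorial) := by
  intro d
  induction d with
  | zero =>
    intro c
    rcases le_or_gt 0 c with h | h
    · have h1 : (volume : Measure (Fin 0 → ℝ)) Set.univ = 1 := by
        rw [← Set.pi_univ, volume_pi_pi]; simp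
      calc volume {x : Fin 0 → ℝ | (∀ i, 0 ≤ x i) ∧ ∑ i, x i ≤ c}
          ≤ volume Set.univ := measure_mono (Set.subset_univ _)
        _ = 1 := h1
        _ ≤ ENNReal.ofReal (c^0 / Nat.factorial 0) := by simp
    · have : {x : Fin 0 → ℝ | (∀ i, 0 ≤ x i) ∧ ∑ i, x i ≤ c} = ∅ := by
        ext x
        simp only [Set.mem_setOf_eq, Set.mem_empty_iff_false, iff_false, not_and]
        intro _; simp; linarith
      rw [this]; simp
  | succ d ih =>
    intro c
    set S : Set (Fin (d+1) → ℝ) := {x | (∀ i, 0 ≤ x i) ∧ ∑ i, x i ≤ c} with hS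
    set B : Set (ℝ × (Fin d → ℝ)) := {ty | 0 ≤ ty.1 ∧ (∀ i, 0 ≤ ty.2 i) ∧ ty.1 + ∑ i, ty.2 i ≤ c} with hB
    have hBmeas : MeasurableSet B := by
      have : B = {ty : ℝ × (Fin d → ℝ) | 0 ≤ ty.1} ∩ ((⋂ i, {ty | 0 ≤ ty.2 i}) ∩ {ty | ty.1 + ∑ i, ty.2 i ≤ c}) := by
        ext ty; simp [hB, Set.mem_iInter]
      rw [this]
      refine (measurableSet_le measurable_const measurable_fst).inter
        ((MeasurableSet.iInter fun i => measurableSet_le measurable_const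
          ((measurable_pi_apply i).comp measurable_snd)).inter
          (measurableSet_le (measurable_fst.add (Finset.measurable_sum _ (fun i _ => (measurable_pi_apply i).comp measurable_snd))) measurable_const))
    have hmp := MeasureTheory.volume_preserving_piFinSuccAbove (fun _ : Fin (d+1) => ℝ) 0
    have hpre : (MeasurableEquiv.piFinSuccAbove (fun _ : Fin (d+1) => ℝ) 0) ⁻¹' B = S := by
      ext x
      simp only [hB, hS, MeasurableEquiv.piFinSuccAbove, Set.mem_preimage, Set.mem_setOf_eq]
      constructor
      · rintro ⟨h1, h2, h3⟩
        constructor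
        · intro i
          rcases Fin.eq_zero_or_eq_succ i with rfl | ⟨j, rfl⟩
          · exact h1
          · simpa [Fin.tail] using h2 j
        · rw [Fin.sum_univ_succ]; simpa [Fin.tail] using h3
      · rintro ⟨h1, h2⟩
        refine ⟨h1 0, fun i => by simpa [Fin.tail] using h1 _, ?_⟩
        rw [Fin.sum_univ_succ] at h2; simpa [Fin.tail] using h2
    have hvol : volume S = (volume.prod volume) B := by
      rw [← hpre]
      exact hmp.measure_preimage hBmeas.nullMeasurableSet
    rw [hvol, Measure.prod_apply hBmeas]
    have hslice : ∀ t : ℝ, volume (Prod.mk t ⁻¹' B) ≤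
        Set.indicator (Set.Icc 0 c) (fun t => ENNReal.ofReal ((c - t)^d / d.factorial)) t := by
      intro t
      rcases le_or_gt 0 t with ht | ht
      · rcases le_or_gt t c with htc | htc
        · rw [Set.indicator_of_mem (Set.mem_Icc.mpr ⟨ht, htc⟩)]
          refine le_trans (measure_mono ?_) (ih (c - t))
          intro y hy
          simp only [hB, Set.mem_preimage, Set.mem_setOf_eq] at hy
          show (∀ i, 0 ≤ y i) ∧ ∑ i, y i ≤ c - t
          exact ⟨hy.2.1, by linarith [hy.2.2]⟩
        · have : Prod.mk t ⁻¹' B = ∅ := by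
            ext y; simp only [hB, Set.mem_preimage, Set.mem_setOf_eq, Set.mem_empty_iff_false, iff_false]
            rintro ⟨_, h2, h3⟩
            have : 0 ≤ ∑ i, y i := Finset.sum_nonneg fun i _ => h2 i
            linarith
          simp [this]
      · have : Prod.mk t ⁻¹' B = ∅ := by
          ext y; simp only [hB, Set.mem_preimage, Set.mem_setOf_eq, Set.mem_empty_iff_false, iff_false]
          rintro ⟨h1, _, _⟩; linarith
        simp [this]
    refine le_trans (lintegral_mono hslice) ?_
    rw [lintegral_indicator measurableSet_Icc]
    rcases le_or_gt 0 c with hc | hc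
    · have hcont : ContinuousOn (fun t : ℝ => (c - t)^d / d.factorial) (Set.Icc 0 c) := by
        fun_prop
      have hint : IntegrableOn (fun t : ℝ => (c - t)^d / d.factorial) (Set.Icc 0 c) :=
        hcont.integrableOn_Icc
      have hnn : 0 ≤ᶠ[ae (volume.restrict (Set.Icc 0 c))] fun t : ℝ => (c - t)^d / d.factorial := by
        filter_upwards [MeasureTheory.ae_restrict_mem measurableSet_Icc] with t ht
        have : 0 ≤ c - t := by linarith [ht.2]
        positivity
      rw [← ofReal_integral_eq_lintegral_ofReal hint hnn]
      apply ENNReal.ofReal_le_ofReal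
      have h1 : ∫ t in Set.Icc 0 c, (c - t)^d / d.factorial = ∫ t in (0:ℝ)..c, (c - t)^d / d.factorial := by
        rw [intervalIntegral.integral_of_le hc, MeasureTheory.integral_Icc_eq_integral_Ioc]
      rw [h1, intervalIntegral.integral_div, intervalIntegral.integral_comp_sub_left (fun x => x^d) c]
      simp only [sub_zero, sub_self]
      rw [integral_pow, zero_pow (Nat.succ_ne_zero d), sub_zero]
      have hfac : ((d+1).factorial : ℝ) = ((d:ℝ)+1) * d.factorial := by
        rw [Nat.factorial_succ]; push_cast; ring
      rw [hfac]
      have hd : (0:ℝ) < d.factorial := by positivity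
      have hd1 : (0:ℝ) < (d:ℝ)+1 := by positivity
      apply le_of_eq
      push_cast
      field_simp
    · rw [Set.Icc_eq_empty (by linarith), Measure.restrict_empty, lintegral_zero_measure]
      exact zero_le


lemma corner_vol' (ι : Type) [Fintype ι] (c : ℝ) :
    volume {x : ι → ℝ | (∀ i, 0 ≤ x i) ∧ ∑ i, x i ≤ c}
      ≤ ENNReal.ofReal (c^(Fintype.card ι) / (Fintype.card ι).factorial) := by
  set d := Fintype.card ι
  set e : Fin d ≃ ι := (Fintype.equivFin ι).symm
  have hmp := MeasureTheory.volume_measurePreserving_piCongrLeft (fun _ : ι => ℝ) e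
  set S : Set (ι → ℝ) := {x | (∀ i, 0 ≤ x i) ∧ ∑ i, x i ≤ c} with hSdef
  have hpre : (MeasurableEquiv.piCongrLeft (fun _ : ι => ℝ) e) ⁻¹' S
      = {x : Fin d → ℝ | (∀ i, 0 ≤ x i) ∧ ∑ i, x i ≤ c} := by
    ext x
    have happ : ∀ (x : Fin d → ℝ) (i : Fin d), (MeasurableEquiv.piCongrLeft (fun _ : ι => ℝ) e) x (e i) = x i := by
      intro x i
      rw [MeasurableEquiv.coe_piCongrLeft e]
      exact Equiv.piCongrLeft_apply_apply (fun _ : ι => ℝ) e x i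
    simp only [Set.mem_preimage, hSdef, Set.mem_setOf_eq]
    constructor
    · rintro ⟨h1, h2⟩
      refine ⟨fun i => by simpa [happ x i] using h1 (e i), ?_⟩
      calc ∑ i, x i = ∑ i, (MeasurableEquiv.piCongrLeft (fun _ : ι => ℝ) e) x (e i) := by
            simp [happ x]
        _ = ∑ j, (MeasurableEquiv.piCongrLeft (fun _ : ι => ℝ) e) x j := Fintype.sum_equiv e _ _ (fun i => rfl)
        _ ≤ c := h2
    · rintro ⟨h1, h2⟩
      constructor
      · intro j
        rw [← e.apply_symm_apply j, happ x (e.symm j)]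
        exact h1 _
        
      · calc ∑ j, (MeasurableEquiv.piCongrLeft (fun _ : ι => ℝ) e) x j
            = ∑ i, (MeasurableEquiv.piCongrLeft (fun _ : ι => ℝ) e) x (e i) :=
              (Fintype.sum_equiv e _ _ (fun i => rfl)).symm
          _ = ∑ i, x i := by simp [happ x]
          _ ≤ c := h2
  have hSm : NullMeasurableSet S := by
    have : MeasurableSet S := by
      have : S = (⋂ i, {x : ι → ℝ | 0 ≤ x i}) ∩ {x | ∑ i, x i ≤ c} := by
        ext x; simp [hSdef, Set.mem_iInter]
      rw [this]
      exact (MeasurableSet.iInter fun i => measurableSet_le measurable_const (measurable_pi_apply i)).inter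
        (measurableSet_le (by fun_prop) measurable_const)
    exact this.nullMeasurableSet
  calc volume S = volume ((MeasurableEquiv.piCongrLeft (fun _ : ι => ℝ) e) ⁻¹' S) :=
        (hmp.measure_preimage hSm).symm
    _ ≤ _ := by rw [hpre]; exact corner_vol d c


lemma cyl_vol (m : ℕ) (K : Finset (Fin m)) :
    volume {x : Fin m → ℝ | (∀ i, x i ∈ Set.Ioc (0:ℝ) 1) ∧ ∑ i ∈ K, x i ≤ 1/2}
      ≤ ENNReal.ofReal ((1/2:ℝ)^K.card / K.card.factorial) := by
  classical
  letI instF : Fintype {i : Fin m // i ∈ K} := Subtype.fintype _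
  set e := MeasurableEquiv.piEquivPiSubtypeProd (fun _ : Fin m => ℝ) (· ∈ K) with he
  have hmp := MeasureTheory.volume_preserving_piEquivPiSubtypeProd (fun _ : Fin m => ℝ) (· ∈ K)
  set A : Set ({i : Fin m // i ∈ K} → ℝ) := {y | (∀ j, 0 ≤ y j) ∧ ∑ j, y j ≤ 1/2} with hA
  set B : Set ({i : Fin m // ¬ i ∈ K} → ℝ) := Set.pi Set.univ (fun _ => Set.Ioc (0:ℝ) 1) with hBdef
  have hAmeas : MeasurableSet A := by
    have : A = (⋂ j, {y : {i : Fin m // i ∈ K} → ℝ | 0 ≤ y j}) ∩ {y | ∑ j, y j ≤ 1/2} := by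
      ext y; simp [hA, Set.mem_iInter]
    rw [this]
    exact (MeasurableSet.iInter fun j => measurableSet_le measurable_const (measurable_pi_apply j)).inter
      (measurableSet_le (by fun_prop) measurable_const)
  have hBmeas : MeasurableSet B := MeasurableSet.univ_pi (fun _ => measurableSet_Ioc)
  have hsub : {x : Fin m → ℝ | (∀ i, x i ∈ Set.Ioc (0:ℝ) 1) ∧ ∑ i ∈ K, x i ≤ 1/2}
      ⊆ e ⁻¹' (A ×ˢ B) := by
    intro x hx
    obtain ⟨h1, h2⟩ := hx
    simp only [Set.mem_preimage, he, MeasurableEquiv.piEquivPiSubtypeProd, Equiv.piEquivPiSubtypeProd,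
      MeasurableEquiv.coe_mk, Equiv.coe_fn_mk, Set.mem_prod, hA, hBdef, Set.mem_setOf_eq, Set.mem_pi]
    refine ⟨⟨fun j => (h1 j.1).1.le, ?_⟩, fun j _ => h1 j.1⟩
    have hsum : ∑ j : {i : Fin m // i ∈ K}, x j.1 = ∑ i ∈ K, x i := by
      exact (Finset.sum_subtype K (fun i => Iff.rfl) (fun i => x i)).symm
    exact hsum.le.trans h2
  calc volume _ ≤ volume (e ⁻¹' (A ×ˢ B)) := measure_mono hsub
    _ = volume (A ×ˢ B) := by
        have h := hmp.measure_preimage (hAmeas.prod hBmeas).nullMeasurableSet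
        convert h using 2 <;> exact Subsingleton.elim _ _
    _ = volume A * volume B := by
        rw [MeasureTheory.Measure.volume_eq_prod, Measure.prod_prod]
    _ ≤ ENNReal.ofReal ((1/2:ℝ)^K.card / K.card.factorial) * 1 := by
        apply mul_le_mul'
        · have := corner_vol' {i : Fin m // i ∈ K} (1/2)
          rwa [Fintype.card_coe] at this
        · rw [hBdef, volume_pi_pi]
          simp [Real.volume_Ioc]
    _ = _ := mul_one _


lemma emb_measurable (m : ℕ) : Measurable (emb m) := by
  rw [measurable_pi_iff]
  intro j
  induction j using Fin.lastCases with
  | last =>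
    simp only [emb, Fin.snoc_last]
    fun_prop
  | cast i =>
    simp only [emb, Fin.snoc_castSucc]
    exact measurable_pi_apply i

lemma simplex_measurable (m : ℕ) : MeasurableSet (Simplex m) := by
  have : Simplex m = (⋂ i, {ℓ : Fin (m+1) → ℝ | 0 < ℓ i}) ∩ {ℓ | ∑ i, ℓ i = 1} := by
    ext ℓ; simp [Simplex, Set.mem_iInter]
  rw [this]
  exact (MeasurableSet.iInter fun i => measurableSet_lt measurable_const (measurable_pi_apply i)).inter
    (measurableSet_eq_fun (by fun_prop) measurable_const)

lemma sumJ_measurable (m : ℕ) (J : Finset (Fin (m+1))) :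
    MeasurableSet {ℓ : Fin (m+1) → ℝ | ℓ ∈ Simplex m ∧ 1/2 ≤ ∑ i ∈ J, ℓ i} := by
  refine (simplex_measurable m).inter ?_
  exact measurableSet_le measurable_const (Finset.measurable_sum J (fun i _ => measurable_pi_apply i))

lemma simplexProb_apply (m : ℕ) {S : Set (Fin (m+1) → ℝ)} (hS : MeasurableSet S) :
    simplexProb m S = (m.factorial : ENNReal) * volume (emb m ⁻¹' S ∩ emb m ⁻¹' Simplex m) := by
  rw [simplexProb, Measure.smul_apply, Measure.map_apply (emb_measurable m) hS,
    Measure.restrict_apply (( emb_measurable m) hS)]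
  rfl

lemma simplexProb_compl_simplex (m : ℕ) : simplexProb m (Simplex m)ᶜ = 0 := by
  rw [simplexProb_apply m (simplex_measurable m).compl]
  have : emb m ⁻¹' (Simplex m)ᶜ ∩ emb m ⁻¹' Simplex m = ∅ := by
    ext x; simp
  rw [this]
  simp

lemma piece_bound (m q : ℕ) (J : Finset (Fin (m+1))) (hJ : J.card = q) :
    simplexProb m {ℓ | ℓ ∈ Simplex m ∧ 1/2 ≤ ∑ i ∈ J, ℓ i}
      ≤ (m.factorial : ENNReal) * ENNReal.ofReal ((1/2:ℝ)^(m-q) / (m-q).factorial) := by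
  classical
  -- K0 : indices i of Fin m with castSucc i ∉ J
  set K0 : Finset (Fin m) := Finset.univ.filter (fun i => i.castSucc ∉ J) with hK0
  have hK0card : m - q ≤ K0.card := by
    have h1 : (Finset.univ.filter (fun i : Fin m => i.castSucc ∈ J)).card ≤ q := by
      calc (Finset.univ.filter (fun i : Fin m => i.castSucc ∈ J)).card
          = ((Finset.univ.filter (fun i : Fin m => i.castSucc ∈ J)).image Fin.castSucc).card := by
            rw [Finset.card_image_of_injective _ (Fin.castSucc_injective m)]
        _ ≤ J.card := by
            apply Finset.card_le_card
            intro j hj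
            simp only [Finset.mem_image, Finset.mem_filter] at hj
            obtain ⟨i, ⟨_, hi⟩, rfl⟩ := hj
            exact hi
        _ = q := hJ
    have h2 := Finset.card_filter_add_card_filter_not
      (s := (Finset.univ : Finset (Fin m))) (p := fun i : Fin m => i.castSucc ∈ J)
    simp only [Finset.card_univ, Fintype.card_fin] at h2
    have h3 : K0.card = (Finset.univ.filter (fun i : Fin m => ¬ i.castSucc ∈ J)).card := by rw [hK0]
    omega
  obtain ⟨K, hKsub, hKcard⟩ := Finset.exists_subset_card_eq hK0card
  have hsub : emb m ⁻¹' {ℓ | ℓ ∈ Simplex m ∧ 1/2 ≤ ∑ i ∈ J, ℓ i} ∩ emb m ⁻¹' Simplex m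
      ⊆ {x : Fin m → ℝ | (∀ i, x i ∈ Set.Ioc (0:ℝ) 1) ∧ ∑ i ∈ K, x i ≤ 1/2} := by
    rintro x ⟨hx1, _⟩
    obtain ⟨⟨hpos, hsum⟩, hJhalf⟩ := hx1
    have hylt : ∀ j, emb m x j ≤ 1 := by
      intro j
      have : emb m x j ≤ ∑ i, emb m x i :=
        Finset.single_le_sum (fun i _ => (hpos i).le) (Finset.mem_univ j)
      rw [hsum] at this; exact this
    have hxc : ∀ i : Fin m, x i = emb m x i.castSucc := by
      intro i; rw [emb, Fin.snoc_castSucc]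
    constructor
    · intro i
      rw [hxc i]
      exact ⟨hpos _, hylt _⟩
    · -- sum over K
      have himg : ∑ i ∈ K, x i = ∑ j ∈ K.image Fin.castSucc, emb m x j := by
        rw [Finset.sum_image (fun a _ b _ h => Fin.castSucc_injective m h)]
        exact Finset.sum_congr rfl (fun i _ => hxc i)
      have hdisj : K.image Fin.castSucc ⊆ Jᶜ := by
        intro j hj
        simp only [Finset.mem_image] at hj
        obtain ⟨i, hi, rfl⟩ := hj
        have := hKsub hi
        rw [hK0, Finset.mem_filter] at this
        simpa using this.2
      have hcompl : ∑ j ∈ Jᶜ, emb m x j ≤ 1/2 := by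
        have : ∑ j ∈ J, emb m x j + ∑ j ∈ Jᶜ, emb m x j = 1 := by
          rw [Finset.sum_add_sum_compl]; exact hsum
        linarith
      rw [himg]
      calc ∑ j ∈ K.image Fin.castSucc, emb m x j ≤ ∑ j ∈ Jᶜ, emb m x j :=
            Finset.sum_le_sum_of_subset_of_nonneg hdisj (fun j _ _ => (hpos j).le)
        _ ≤ 1/2 := hcompl
  calc simplexProb m {ℓ | ℓ ∈ Simplex m ∧ 1/2 ≤ ∑ i ∈ J, ℓ i}
      = (m.factorial : ENNReal) * volume (emb m ⁻¹' {ℓ | ℓ ∈ Simplex m ∧ 1/2 ≤ ∑ i ∈ J, ℓ i} ∩ emb m ⁻¹' Simplex m) :=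
        simplexProb_apply m (sumJ_measurable m J)
    _ ≤ (m.factorial : ENNReal) * volume {x : Fin m → ℝ | (∀ i, x i ∈ Set.Ioc (0:ℝ) 1) ∧ ∑ i ∈ K, x i ≤ 1/2} :=
        mul_le_mul_right (measure_mono hsub) _
    _ ≤ (m.factorial : ENNReal) * ENNReal.ofReal ((1/2:ℝ)^(m-q) / (m-q).factorial) := by
        have := cyl_vol m K
        rw [hKcard] at this
        exact mul_le_mul_right this _


lemma gamma_measurable (m q : ℕ) : MeasurableSet (Gamma m q) := by
  have : Gamma m q = Simplex m ∩
      ⋂ (J : Finset (Fin (m+1))) (_ : J.card = q), {ℓ | ∑ i ∈ J, ℓ i < 1/2} := by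
    ext ℓ; simp [Gamma, Set.mem_iInter]
  rw [this]
  exact (simplex_measurable m).inter (MeasurableSet.iInter fun J => MeasurableSet.iInter fun _ =>
    measurableSet_lt (Finset.measurable_sum J (fun i _ => measurable_pi_apply i)) measurable_const)

lemma offGamma_subset (m q : ℕ) :
    Simplex m \ Gamma m q ⊆
      ⋃ J ∈ Finset.univ.powersetCard q, {ℓ : Fin (m+1) → ℝ | ℓ ∈ Simplex m ∧ 1/2 ≤ ∑ i ∈ J, ℓ i} := by
  intro ℓ hℓ
  obtain ⟨hΔ, hnΓ⟩ := hℓ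
  simp only [Gamma, Set.mem_setOf_eq, not_and, not_forall] at hnΓ
  obtain ⟨J, hJc, hJs⟩ := hnΓ hΔ
  refine Set.mem_biUnion ?_ ⟨hΔ, not_lt.mp hJs⟩
  exact Finset.mem_powersetCard_univ.mpr hJc

lemma offGamma_measure_le (μ : Measure (Fin (m+1) → ℝ)) (q : ℕ)
    (c : ENNReal) (hc : ∀ J : Finset (Fin (m+1)), J.card = q →
      μ {ℓ | ℓ ∈ Simplex m ∧ 1/2 ≤ ∑ i ∈ J, ℓ i} ≤ c) :
    μ (Simplex m \ Gamma m q) ≤ ((m+1).choose q : ENNReal) * c := by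
  calc μ (Simplex m \ Gamma m q)
      ≤ μ (⋃ J ∈ Finset.univ.powersetCard q, {ℓ : Fin (m+1) → ℝ | ℓ ∈ Simplex m ∧ 1/2 ≤ ∑ i ∈ J, ℓ i}) :=
        measure_mono (offGamma_subset m q)
    _ ≤ ∑ J ∈ Finset.univ.powersetCard q, μ {ℓ : Fin (m+1) → ℝ | ℓ ∈ Simplex m ∧ 1/2 ≤ ∑ i ∈ J, ℓ i} :=
        measure_biUnion_finset_le _ _
    _ ≤ ∑ _J ∈ (Finset.univ : Finset (Fin (m+1))).powersetCard q, c :=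
        Finset.sum_le_sum (fun J hJ => hc J (Finset.mem_powersetCard_univ.mp hJ))
    _ = ((m+1).choose q : ENNReal) * c := by
        rw [Finset.sum_const, Finset.card_powersetCard, Finset.card_univ, Fintype.card_fin, nsmul_eq_mul]

lemma step_A (m q k p : ℕ) (hm : 1 ≤ m) (hk : 1 ≤ k) (ν : Measure (Fin (m+1) → ℝ))
    [IsProbabilityMeasure ν] (hnull : ν (Simplex m)ᶜ = 0)
    (F : (Fin (m+1) → ℝ) → ℝ) (hFmeas : Measurable F)
    (hFconst : ∀ ℓ ∈ Gamma m q, F ℓ = ∑ i ∈ Finset.range (p+1), (Nat.choose m i : ℝ))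
    (hFbd : ∀ ℓ ∈ Simplex m, 0 ≤ F ℓ ∧ F ℓ ≤ 2 * (m:ℝ)^p) :
    |(∫ ℓ, (F ℓ)^k ∂ν) - (∑ i ∈ Finset.range (p+1), (Nat.choose m i : ℝ))^k|
      ≤ 2 * (((p:ℝ)+3) * (m:ℝ)^p)^k * (ν (Simplex m \ Gamma m q)).toReal := by
  set B : ℝ := ∑ i ∈ Finset.range (p+1), (Nat.choose m i : ℝ) with hB
  set M : ℝ := ((p:ℝ)+3) * (m:ℝ)^p with hM
  have hm1 : (1:ℝ) ≤ (m:ℝ) := by exact_mod_cast hm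
  have hmp1 : (1:ℝ) ≤ (m:ℝ)^p := one_le_pow₀ hm1
  have hMpos : 0 < M := by positivity
  have hBnn : 0 ≤ B := Finset.sum_nonneg fun i _ => Nat.cast_nonneg _
  have hBle : B ≤ M := by
    rw [hB, hM]
    calc ∑ i ∈ Finset.range (p+1), (Nat.choose m i : ℝ)
        ≤ ∑ _i ∈ Finset.range (p+1), (m:ℝ)^p := by
          apply Finset.sum_le_sum
          intro i hi
          have h1 : (Nat.choose m i : ℝ) ≤ (m:ℝ)^i / (Nat.factorial i : ℝ) :=
            Nat.choose_le_pow_div i m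
          have h2 : (m:ℝ)^i / (Nat.factorial i : ℝ) ≤ (m:ℝ)^i := by
            apply div_le_self (by positivity)
            exact_mod_cast Nat.one_le_iff_ne_zero.mpr (Nat.factorial_ne_zero i)
          have h3 : (m:ℝ)^i ≤ (m:ℝ)^p :=
            pow_le_pow_right₀ hm1 (Nat.lt_succ_iff.mp (Finset.mem_range.mp hi))
          linarith
      _ = ((p:ℝ)+1) * (m:ℝ)^p := by rw [Finset.sum_const, Finset.card_range]; push_cast; ring
      _ ≤ ((p:ℝ)+3) * (m:ℝ)^p := by nlinarith
  have h2M : 2 * (m:ℝ)^p ≤ M := by rw [hM]; nlinarith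
  set G' : (Fin (m+1) → ℝ) → ℝ := Set.indicator (Simplex m) (fun ℓ => (F ℓ)^k) with hG'
  have hG'meas : Measurable G' :=
    Measurable.indicator (hFmeas.pow_const k) (simplex_measurable m)
  have hG'bd : ∀ ℓ, |G' ℓ| ≤ M^k := by
    intro ℓ
    rw [hG']
    by_cases h : ℓ ∈ Simplex m
    · rw [Set.indicator_of_mem h]
      obtain ⟨h0, h1⟩ := hFbd ℓ h
      rw [abs_of_nonneg (pow_nonneg h0 k)]
      exact pow_le_pow_left₀ h0 (h1.trans h2M) k
    · rw [Set.indicator_of_notMem h]; simp; positivity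
  have hG'int : Integrable G' ν := by
    refine Integrable.mono' (integrable_const (M^k)) hG'meas.aestronglyMeasurable ?_
    exact Filter.Eventually.of_forall hG'bd
  have hae : (fun ℓ => (F ℓ)^k) =ᵐ[ν] G' := by
    have hsub : {ℓ | ¬ ((F ℓ)^k = G' ℓ)} ⊆ (Simplex m)ᶜ := by
      intro ℓ hℓ
      simp only [Set.mem_setOf_eq] at hℓ
      by_contra hmem
      have hmem' : ℓ ∈ Simplex m := Set.notMem_compl_iff.mp hmem
      exact hℓ (by rw [hG', Set.indicator_of_mem hmem'])
    exact measure_mono_null hsub hnull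
  have hint_eq : ∫ ℓ, (F ℓ)^k ∂ν = ∫ ℓ, G' ℓ ∂ν := integral_congr_ae hae
  have hconst : ∫ _ℓ, B^k ∂ν = B^k := by
    rw [integral_const]; simp
  have hsplit : (∫ ℓ, (F ℓ)^k ∂ν) - B^k = ∫ ℓ, (G' ℓ - B^k) ∂ν := by
    rw [hint_eq, integral_sub hG'int (integrable_const _), integral_const]
    simp
  rw [hsplit]
  set bound : (Fin (m+1) → ℝ) → ℝ :=
    Set.indicator (Simplex m \ Gamma m q) (fun _ => 2 * M^k) with hbnd
  have hbnd_meas : MeasurableSet (Simplex m \ Gamma m q) :=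
    (simplex_measurable m).diff (gamma_measurable m q)
  have hbound_int : Integrable bound ν := (integrable_const _).indicator hbnd_meas
  have habs_int : Integrable (fun ℓ => |G' ℓ - B^k|) ν :=
    (hG'int.sub (integrable_const _)).abs
  have hptwise : ∀ᵐ ℓ ∂ν, |G' ℓ - B^k| ≤ bound ℓ := by
    have hsimp : ∀ᵐ ℓ ∂ν, ℓ ∈ Simplex m := by
      rw [MeasureTheory.ae_iff]
      exact measure_mono_null (fun ℓ h => by simpa using h) hnull
    filter_upwards [hsimp] with ℓ hℓ
    by_cases hγ : ℓ ∈ Gamma m q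
    · have : G' ℓ = B^k := by
        rw [hG', Set.indicator_of_mem hℓ, hFconst ℓ hγ]
      rw [this, sub_self, abs_zero, hbnd]
      exact Set.indicator_nonneg (fun _ _ => by positivity) _
    · have hb : bound ℓ = 2 * M^k := Set.indicator_of_mem (Set.mem_diff _ |>.mpr ⟨hℓ, hγ⟩) _
      rw [hb]
      have h1 := hG'bd ℓ
      have h2 : |B^k| ≤ M^k := by
        rw [abs_of_nonneg (pow_nonneg hBnn k)]
        exact pow_le_pow_left₀ hBnn hBle k
      calc |G' ℓ - B^k| ≤ |G' ℓ| + |B^k| := abs_sub _ _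
        _ ≤ M^k + M^k := add_le_add h1 h2
        _ = 2 * M^k := by ring
  calc |∫ ℓ, (G' ℓ - B^k) ∂ν| ≤ ∫ ℓ, |G' ℓ - B^k| ∂ν := by
        simpa [Real.norm_eq_abs] using
          MeasureTheory.norm_integral_le_integral_norm (fun ℓ => G' ℓ - B^k) (μ := ν)
    _ ≤ ∫ ℓ, bound ℓ ∂ν := integral_mono_ae habs_int hbound_int hptwise
    _ = 2 * M^k * (ν (Simplex m \ Gamma m q)).toReal := by
        rw [hbnd, integral_indicator_const _ hbnd_meas]
        rw [smul_eq_mul, measureReal_def]; ring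


/-- higher moments: under the same admissibility assumptions,
with B_n = ∑_{i=0}^p C(n-1,i) and k ≥ 1,
|∫ F_n^k dν_n − B_n^k| < C·aⁿ for all n ≥ 3 (n = m+1). -/
theorem stmt17 (f : (m : ℕ) → (Fin (m+1) → ℝ) → ℝ)
    (hmeas : ∀ m, Measurable (f m))
    (hnonneg : ∀ m ℓ, 0 ≤ f m ℓ)
    (hprob : ∀ m, ∫⁻ ℓ, ENNReal.ofReal (f m ℓ) ∂(simplexProb m) = 1)
    (hadm : ∀ p : ℕ, 1 ≤ p → ∃ A > (0:ℝ), ∃ b ∈ Set.Ioo (0:ℝ) 2,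
        ∀ m : ℕ, ∀ ℓ ∈ Lambda m p, f m ℓ ≤ A * b^(m+1))
    (p k : ℕ) (hk : 1 ≤ k) (F : (m : ℕ) → (Fin (m+1) → ℝ) → ℝ)
    (hFmeas : ∀ m, Measurable (F m))
    (hFconst : ∀ m : ℕ, ∀ ℓ ∈ Gamma m (p+2),
        F m ℓ = ∑ i ∈ Finset.range (p+1), (Nat.choose m i : ℝ))
    (hFbd : ∀ m : ℕ, ∀ ℓ ∈ Simplex m, 0 ≤ F m ℓ ∧ F m ℓ ≤ 2 * (m:ℝ)^p) :
    ∃ C > (0:ℝ), ∃ a ∈ Set.Ioo (0:ℝ) 1, ∀ m : ℕ, 2 ≤ m →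
      |(∫ ℓ, (F m ℓ)^k
            ∂((simplexProb m).withDensity (fun ℓ => ENNReal.ofReal (f m ℓ))))
          - (∑ i ∈ Finset.range (p+1), (Nat.choose m i : ℝ))^k|
        < C * a^(m+1) := by
  classical
  set q := p + 2 with hq
  obtain ⟨A, hApos, b, ⟨hb0, hb2⟩, hbound⟩ := hadm q (by omega)
  set a : ℝ := (b + 2) / 4 with ha
  have ha0 : 0 < a := by rw [ha]; linarith
  have ha1 : a < 1 := by rw [ha]; linarith
  have hba : b / 2 < a := by rw [ha]; linarith
  set r : ℝ := b / (2 * a) with hr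
  have hr0 : 0 ≤ r := by positivity
  have hr1 : r < 1 := by rw [hr, div_lt_one (by positivity)]; linarith
  set D := p * k + 2 * q with hD
  have htend := tendsto_pow_const_mul_const_pow_of_lt_one D hr0 hr1
  obtain ⟨C0, hC0⟩ := htend.bddAbove_range
  have hC0' : ∀ n : ℕ, (n:ℝ)^D * r^n ≤ C0 := fun n => hC0 (Set.mem_range_self n)
  have hC0nn : 0 ≤ C0 := le_trans (by positivity) (hC0' 1)
  set c2 : ℝ := 2 * ((p:ℝ)+3)^k * 2^(q+1) * A with hc2
  have hc2pos : 0 < c2 := by positivity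
  set Cs : ℝ := 2 * (((p:ℝ)+3) * ((q:ℝ)+1)^p)^k / a^(q+1) with hCs
  have hCsnn : 0 ≤ Cs := by positivity
  refine ⟨c2 * C0 + Cs + 1, by positivity, a, ⟨ha0, ha1⟩, ?_⟩
  intro m hm
  set ν := (simplexProb m).withDensity (fun ℓ => ENNReal.ofReal (f m ℓ)) with hν
  haveI : IsProbabilityMeasure ν :=
    ⟨by rw [hν, withDensity_apply _ MeasurableSet.univ, Measure.restrict_univ]; exact hprob m⟩
  have hνnull : ν (Simplex m)ᶜ = 0 := by
    rw [hν, withDensity_apply _ (simplex_measurable m).compl,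
      Measure.restrict_eq_zero.mpr (simplexProb_compl_simplex m), lintegral_zero_measure]
  have hA1 := step_A m q k p (by omega) hk ν hνnull (F m) (hFmeas m) (hFconst m) (hFbd m)
  set S := Simplex m \ Gamma m q with hSdef
  have hSmeas : MeasurableSet S := (simplex_measurable m).diff (gamma_measurable m q)
  -- S ⊆ Lambda m q
  have hsubΛ : S ⊆ Lambda m q := by
    rintro ℓ ⟨hΔ, hnΓ⟩
    simp only [Gamma, Set.mem_setOf_eq, not_and, not_forall] at hnΓ
    obtain ⟨J, hJc, hJs⟩ := hnΓ hΔ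
    refine ⟨hΔ, ?_⟩
    by_contra hcon
    push_neg at hcon
    have hJne : J.Nonempty := Finset.card_pos.mp (by omega)
    have hsumlt : ∑ i ∈ J, ℓ i < ∑ _i ∈ J, 1/(2*(q:ℝ)) :=
      Finset.sum_lt_sum_of_nonempty hJne (fun i _ => hcon i)
    rw [Finset.sum_const, hJc, nsmul_eq_mul] at hsumlt
    have hqpos : (0:ℝ) < (q:ℝ) := by exact_mod_cast (by omega : 0 < q)
    apply hJs
    calc ∑ i ∈ J, ℓ i < (q:ℝ) * (1/(2*(q:ℝ))) := hsumlt
      _ = 1/2 := by field_simp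
  -- ν S bound
  have hfS : ∀ ℓ ∈ S, ENNReal.ofReal (f m ℓ) ≤ ENNReal.ofReal (A * b^(m+1)) :=
    fun ℓ hℓ => ENNReal.ofReal_le_ofReal (hbound m ℓ (hsubΛ hℓ))
  have hνS : ν S ≤ ENNReal.ofReal (A * b^(m+1)) * simplexProb m S := by
    rw [hν, withDensity_apply _ hSmeas]
    calc ∫⁻ ℓ in S, ENNReal.ofReal (f m ℓ) ∂(simplexProb m)
        ≤ ∫⁻ _ℓ in S, ENNReal.ofReal (A * b^(m+1)) ∂(simplexProb m) :=
          setLIntegral_mono measurable_const hfS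
      _ = ENNReal.ofReal (A * b^(m+1)) * simplexProb m S := by
          rw [MeasureTheory.setLIntegral_const]
  have hμS : simplexProb m S ≤ ((m+1).choose q : ENNReal) *
      ((m.factorial : ENNReal) * ENNReal.ofReal ((1/2:ℝ)^(m-q) / (m-q).factorial)) :=
    offGamma_measure_le (simplexProb m) q _ (fun J hJ => piece_bound m q J hJ)
  set RB : ℝ := A * b^(m+1) * (((m+1).choose q : ℝ) *
      ((m.factorial:ℝ) * ((1/2:ℝ)^(m-q) / ((m-q).factorial : ℝ)))) with hRB
  have hRBnn : 0 ≤ RB := by positivity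
  have hνtoReal : (ν S).toReal ≤ RB := by
    apply ENNReal.toReal_le_of_le_ofReal hRBnn
    calc ν S ≤ ENNReal.ofReal (A * b^(m+1)) * simplexProb m S := hνS
      _ ≤ ENNReal.ofReal (A * b^(m+1)) * (((m+1).choose q : ENNReal) *
          ((m.factorial : ENNReal) * ENNReal.ofReal ((1/2:ℝ)^(m-q) / (m-q).factorial))) :=
          mul_le_mul_right hμS _
      _ = ENNReal.ofReal RB := by
          rw [hRB, ← ENNReal.ofReal_natCast ((m+1).choose q), ← ENNReal.ofReal_natCast (m.factorial),
            ← ENNReal.ofReal_mul (by positivity), ← ENNReal.ofReal_mul (by positivity),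
            ← ENNReal.ofReal_mul (by positivity)]
  set M : ℝ := ((p:ℝ)+3) * (m:ℝ)^p with hM
  have hm1 : (1:ℝ) ≤ (m:ℝ) := by exact_mod_cast (by omega : 1 ≤ m)
  have hMnn : 0 ≤ M := by positivity
  have hT : |(∫ ℓ, (F m ℓ)^k ∂ν) - (∑ i ∈ Finset.range (p+1), (Nat.choose m i : ℝ))^k|
      ≤ 2 * M^k * RB := by
    calc |(∫ ℓ, (F m ℓ)^k ∂ν) - (∑ i ∈ Finset.range (p+1), (Nat.choose m i : ℝ))^k|
        ≤ 2 * M^k * (ν S).toReal := hA1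
      _ ≤ 2 * M^k * RB := by
          apply mul_le_mul_of_nonneg_left hνtoReal (by positivity)
  have hapow : (0:ℝ) < a^(m+1) := by positivity
  rcases le_or_gt q m with hmq | hmq
  · -- main case
    have hfacsplit : (m.factorial:ℝ) * ((1/2:ℝ)^(m-q) / ((m-q).factorial : ℝ))
        = (m.descFactorial q : ℝ) * (1/2:ℝ)^(m-q) := by
      have h := Nat.factorial_mul_descFactorial hmq
      have h' : (m.factorial : ℝ) = ((m-q).factorial : ℝ) * (m.descFactorial q : ℝ) := by
        exact_mod_cast h.symm
      rw [h']
      have hfne : ((m-q).factorial : ℝ) ≠ 0 := by positivity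
      field_simp
    have hpowsplit : (1/2:ℝ)^(m-q) = 2^(q+1) * (1/2:ℝ)^(m+1) := by
      have h : m + 1 = (m - q) + (q + 1) := by omega
      have hsplit2 : (1/2:ℝ)^(m+1) = (1/2:ℝ)^(m-q) * (1/2:ℝ)^(q+1) := by
        rw [h, pow_add]
      rw [hsplit2]
      have h2 : (2:ℝ)^(q+1) * (1/2:ℝ)^(q+1) = 1 := by
        rw [← mul_pow]; norm_num
      calc (1/2:ℝ)^(m-q) = (1/2:ℝ)^(m-q) * ((2:ℝ)^(q+1) * (1/2:ℝ)^(q+1)) := by rw [h2, mul_one]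
        _ = 2^(q+1) * ((1/2:ℝ)^(m-q) * (1/2:ℝ)^(q+1)) := by ring
    have hra : b / 2 = r * a := by
      rw [hr]; field_simp
    have hchoose : (((m+1).choose q : ℕ) : ℝ) ≤ ((m:ℝ)+1)^q := by
      have h1 : (((m+1).choose q : ℕ) : ℝ) ≤ ((m+1:ℕ):ℝ)^q / (q.factorial : ℝ) :=
        Nat.choose_le_pow_div q (m+1)
      have h2 : ((m+1:ℕ):ℝ)^q / (q.factorial : ℝ) ≤ ((m+1:ℕ):ℝ)^q := by
        apply div_le_self (by positivity)
        exact_mod_cast Nat.one_le_iff_ne_zero.mpr (Nat.factorial_ne_zero q)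
      calc (((m+1).choose q : ℕ) : ℝ) ≤ ((m+1:ℕ):ℝ)^q / (q.factorial : ℝ) := h1
        _ ≤ ((m+1:ℕ):ℝ)^q := h2
        _ = ((m:ℝ)+1)^q := by push_cast; ring
    have hdesc : ((m.descFactorial q : ℕ) : ℝ) ≤ ((m:ℝ)+1)^q := by
      calc ((m.descFactorial q : ℕ) : ℝ) ≤ ((m:ℝ))^q := by
            exact_mod_cast Nat.descFactorial_le_pow m q
        _ ≤ ((m:ℝ)+1)^q := by gcongr <;> linarith
    have hMk : M^k ≤ ((p:ℝ)+3)^k * ((m:ℝ)+1)^(p*k) := by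
      have he : ((p:ℝ)+3)^k * ((m:ℝ)+1)^(p*k) = (((p:ℝ)+3) * ((m:ℝ)+1)^p)^k := by
        rw [mul_pow, ← pow_mul]
      rw [he, hM]
      apply pow_le_pow_left₀ hMnn
      apply mul_le_mul_of_nonneg_left _ (by positivity : (0:ℝ) ≤ (p:ℝ)+3)
      exact pow_le_pow_left₀ (Nat.cast_nonneg m) (by linarith) p
    -- putting reals together
    have hb2h : b^(m+1) * (1/2:ℝ)^(m+1) = r^(m+1) * a^(m+1) := by
      rw [← mul_pow, ← mul_pow]
      congr 1
      rw [← hra]; ring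
    have hDpow : ((m:ℝ)+1)^D = ((m:ℝ)+1)^(p*k) * (((m:ℝ)+1)^q * ((m:ℝ)+1)^q) := by
      rw [hD, ← pow_add, ← pow_add]
      congr 1
      omega
    have hkey : 2 * M^k * RB ≤ c2 * C0 * a^(m+1) := by
      rw [hRB, hfacsplit, hpowsplit]
      have h2Mk : 2 * M^k ≤ 2 * (((p:ℝ)+3)^k * ((m:ℝ)+1)^(p*k)) := by linarith [hMk]
      have hz : (0:ℝ) ≤ 2^(q+1) * (1/2:ℝ)^(m+1) := by positivity
      have hinner : (((m+1).choose q : ℕ) : ℝ) * (((m.descFactorial q : ℕ) : ℝ) * (2^(q+1) * (1/2:ℝ)^(m+1)))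
          ≤ ((m:ℝ)+1)^q * (((m:ℝ)+1)^q * (2^(q+1) * (1/2:ℝ)^(m+1))) :=
        mul_le_mul hchoose (mul_le_mul_of_nonneg_right hdesc hz) (by positivity) (by positivity)
      have hmid : A * b^(m+1) * ((((m+1).choose q : ℕ) : ℝ) * (((m.descFactorial q : ℕ) : ℝ) * (2^(q+1) * (1/2:ℝ)^(m+1))))
          ≤ A * b^(m+1) * (((m:ℝ)+1)^q * (((m:ℝ)+1)^q * (2^(q+1) * (1/2:ℝ)^(m+1)))) :=
        mul_le_mul_of_nonneg_left hinner (by positivity)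
      have step1 := mul_le_mul h2Mk hmid (by positivity) (by positivity)
      have heq : 2 * (((p:ℝ)+3)^k * ((m:ℝ)+1)^(p*k)) * (A * b^(m+1) * (((m:ℝ)+1)^q *
            (((m:ℝ)+1)^q * (2^(q+1) * (1/2:ℝ)^(m+1)))))
            = c2 * (((m:ℝ)+1)^D * r^(m+1)) * a^(m+1) := by
        calc 2 * (((p:ℝ)+3)^k * ((m:ℝ)+1)^(p*k)) * (A * b^(m+1) * (((m:ℝ)+1)^q *
            (((m:ℝ)+1)^q * (2^(q+1) * (1/2:ℝ)^(m+1)))))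
            = (2 * ((p:ℝ)+3)^k * 2^(q+1) * A) * (((m:ℝ)+1)^(p*k) * (((m:ℝ)+1)^q * ((m:ℝ)+1)^q))
              * (b^(m+1) * (1/2:ℝ)^(m+1)) := by ring
          _ = (2 * ((p:ℝ)+3)^k * 2^(q+1) * A) * (((m:ℝ)+1)^(p*k) * (((m:ℝ)+1)^q * ((m:ℝ)+1)^q))
              * (r^(m+1) * a^(m+1)) := by rw [hb2h]
          _ = c2 * (((m:ℝ)+1)^D * r^(m+1)) * a^(m+1) := by rw [hc2, hDpow]; ring
      have hfin : ((m:ℝ)+1)^D * r^(m+1) ≤ C0 := by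
        have h := hC0' (m+1)
        push_cast at h
        exact h
      have hlast : c2 * (((m:ℝ)+1)^D * r^(m+1)) * a^(m+1) ≤ c2 * C0 * a^(m+1) :=
        mul_le_mul_of_nonneg_right (mul_le_mul_of_nonneg_left hfin hc2pos.le) hapow.le
      exact (step1.trans_eq heq).trans hlast
    calc |(∫ ℓ, (F m ℓ)^k ∂ν) - (∑ i ∈ Finset.range (p+1), (Nat.choose m i : ℝ))^k|
        ≤ 2 * M^k * RB := hT
      _ ≤ c2 * C0 * a^(m+1) := hkey
      _ < (c2 * C0 + Cs + 1) * a^(m+1) :=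
          mul_lt_mul_of_pos_right (by linarith) hapow
  · -- small m case
    have hν1 : (ν S).toReal ≤ 1 := by
      apply ENNReal.toReal_le_of_le_ofReal (by norm_num)
      simpa using prob_le_one (μ := ν) (s := S)
    have hMsmall : M ≤ ((p:ℝ)+3) * ((q:ℝ)+1)^p := by
      rw [hM]
      have hmqr : (m:ℝ) ≤ (q:ℝ)+1 := by
        have : (m:ℝ) ≤ (q:ℝ) := by exact_mod_cast hmq.le
        linarith
      exact mul_le_mul_of_nonneg_left (pow_le_pow_left₀ (Nat.cast_nonneg m) hmqr p)
        (by positivity)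
    have hT2 : |(∫ ℓ, (F m ℓ)^k ∂ν) - (∑ i ∈ Finset.range (p+1), (Nat.choose m i : ℝ))^k|
        ≤ 2 * (((p:ℝ)+3) * ((q:ℝ)+1)^p)^k := by
      calc |(∫ ℓ, (F m ℓ)^k ∂ν) - (∑ i ∈ Finset.range (p+1), (Nat.choose m i : ℝ))^k|
          ≤ 2 * M^k * (ν S).toReal := hA1
        _ ≤ 2 * M^k * 1 := mul_le_mul_of_nonneg_left hν1 (by positivity)
        _ = 2 * M^k := by ring
        _ ≤ 2 * (((p:ℝ)+3) * ((q:ℝ)+1)^p)^k := by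
            have := pow_le_pow_left₀ hMnn hMsmall k
            linarith
    have hCs2 : 2 * (((p:ℝ)+3) * ((q:ℝ)+1)^p)^k ≤ Cs * a^(m+1) := by
      rw [hCs, div_mul_eq_mul_div, le_div_iff₀ (by positivity)]
      have hale : a^(q+1) ≤ a^(m+1) := by
        apply pow_le_pow_of_le_one ha0.le ha1.le
        omega
      exact mul_le_mul_of_nonneg_left hale (by positivity)
    calc |(∫ ℓ, (F m ℓ)^k ∂ν) - (∑ i ∈ Finset.range (p+1), (Nat.choose m i : ℝ))^k|
        ≤ 2 * (((p:ℝ)+3) * ((q:ℝ)+1)^p)^k := hT2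
      _ ≤ Cs * a^(m+1) := hCs2
      _ < (c2 * C0 + Cs + 1) * a^(m+1) := by
          have h0 : 0 ≤ c2 * C0 := mul_nonneg hc2pos.le hC0nn
          exact mul_lt_mul_of_pos_right (by linarith) hapow
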